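/- Let G be a finite connected cubic graph and let (I1,I2) be a pair of disjoint independent sets satisfying Conditions (I) and (II). Suppose the cycle setup holds for C' in the no-red-P2 case, with all black vertices v1,...,vk of C' lying in I1. Then I1' = (I1 \ {v1,...,vk}) ∪ {u1,...,uk} is an independent set disjoint from I2, and the pair (I1', I2) again satisfies Conditions (I) and (II). -/

import Mathlib

open SimpleGraph

variable {V : Type*}

/-- A finset `I` is an independent set of `G`. -/
def FinsetIndep (G : SimpleGraph V) (I : Finset V) : Prop :=
  ∀ u ∈ I, ∀ v ∈ I, ¬ G.Adj u v

/-- Condition (I): `|I1| + |I2|` is maximum among all pairs of disjoint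
independent sets of `G`. -/
def CondI (G : SimpleGraph V) (I1 I2 : Finset V) : Prop :=
  ∀ J1 J2 : Finset V, Disjoint J1 J2 → FinsetIndep G J1 → FinsetIndep G J2 →
    J1.card + J2.card ≤ I1.card + I2.card

/-- The set of red vertices: the vertices outside `I1 ∪ I2`. -/
def redSet (I1 I2 : Finset V) : Set V := {v | v ∉ I1 ∧ v ∉ I2}

/-- The number of connected components of the subgraph of `G` induced on the
red vertices. -/
noncomputable def numRedComp (G : SimpleGraph V) (I1 I2 : Finset V) : ℕ :=
  Nat.card ((G.induce (redSet I1 I2)).ConnectedComponent)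

/-- Condition (II): subject to Condition (I), the number of connected
components of the subgraph induced on the red vertices is minimum. -/
def CondII (G : SimpleGraph V) (I1 I2 : Finset V) : Prop :=
  ∀ J1 J2 : Finset V, Disjoint J1 J2 → FinsetIndep G J1 → FinsetIndep G J2 →
    CondI G J1 J2 → numRedComp G I1 I2 ≤ numRedComp G J1 J2

/-- The auxiliary graph `H` on the red vertices: two distinct red vertices are
adjacent iff their distance in `G` is at most 2. -/
def Hgraph (G : SimpleGraph V) (I1 I2 : Finset V) : SimpleGraph (redSet I1 I2) where
  Adj x y := x ≠ y ∧ G.edist (x : V) (y : V) ≤ 2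
  symm := by
    refine ⟨?_⟩
    rintro x y ⟨hne, hd⟩
    exact ⟨hne.symm, by rwa [SimpleGraph.edist_comm]⟩
  loopless := by refine ⟨?_⟩; rintro x ⟨hne, -⟩; exact hne rfl

/-- The number of black vertices on the cycle `C'`: `k` in the no-red-`P2`
case and `k - 1` in the red-`P2` case. -/
def blackCount (k : ℕ) (p2 : Bool) : ℕ := if p2 then k - 1 else k

/-- The cycle setup: `u 0, …, u (k-1)` are red vertices forming the vertex set
of a connected component of `H`, and `C'` is a cycle of `G` which is either
`u 0, v 0, u 1, v 1, …, u (k-1), v (k-1), u 0` (no-red-`P2` case, `p2 = false`,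
`2k` distinct vertices), or
`u 0, v 0, u 1, v 1, …, v (k-2), u (k-1), u 0` (red-`P2` case, `p2 = true`,
`2k - 1` distinct vertices, with `u (k-1)` adjacent to `u 0`). -/
def CycleSetup (G : SimpleGraph V) (I1 I2 : Finset V) (k : ℕ)
    (u v : ℕ → V) (p2 : Bool) : Prop :=
  3 ≤ k ∧
  (∀ i < k, u i ∈ redSet I1 I2) ∧
  (∀ i < blackCount k p2, v i ∈ I1 ∨ v i ∈ I2) ∧
  (∀ i < k, ∀ j < k, u i = u j → i = j) ∧
  (∀ i < blackCount k p2, ∀ j < blackCount k p2, v i = v j → i = j) ∧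
  (∀ i < k, ∀ j < blackCount k p2, u i ≠ v j) ∧
  (∀ i < blackCount k p2, G.Adj (u i) (v i)) ∧
  (∀ i < blackCount k p2, G.Adj (v i) (u ((i + 1) % k))) ∧
  (p2 = true → G.Adj (u (k - 1)) (u 0)) ∧
  (∃ c : (Hgraph G I1 I2).ConnectedComponent,
      c.supp = {x : redSet I1 I2 | ∃ i < k, (x : V) = u i})

/-- The vertex set of the cycle `C'`. -/
def cycleVerts (k : ℕ) (u v : ℕ → V) (p2 : Bool) : Set V :=
  {x | (∃ i < k, x = u i) ∨ (∃ i < blackCount k p2, x = v i)}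

-- auxiliary lemma
lemma numComp_congr {α β : Type*} (G : SimpleGraph α) (G' : SimpleGraph β) (e : α ≃ β)
    (h : ∀ x y, G'.Adj (e x) (e y) ↔ G.Adj x y) :
    Nat.card G.ConnectedComponent = Nat.card G'.ConnectedComponent :=
  Nat.card_congr (SimpleGraph.Iso.connectedComponentEquiv ⟨e, h _ _⟩)

/-- Under Conditions (I) and (II) and the cycle setup in the no-red-`P2` case
with all black vertices of `C'` in `I1`, swapping the black and red vertices of
`C'` inside `I1` again yields a pair of disjoint independent sets satisfying
Conditions (I) and (II). -/
theorem swap_cycle_preserves_conditions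
    {V : Type*} [Fintype V] [DecidableEq V] (G : SimpleGraph V) [DecidableRel G.Adj]
    (hconn : G.Connected) (hcubic : ∀ v : V, G.degree v = 3)
    (I1 I2 : Finset V) (hdisj : Disjoint I1 I2)
    (hI1 : FinsetIndep G I1) (hI2 : FinsetIndep G I2)
    (hmax : CondI G I1 I2) (hmin : CondII G I1 I2)
    (k : ℕ) (u v : ℕ → V)
    (hcyc : CycleSetup G I1 I2 k u v false)
    (hblack : ∀ i < k, v i ∈ I1) :
    FinsetIndep G ((I1 \ (Finset.range k).image v) ∪ (Finset.range k).image u) ∧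
    Disjoint ((I1 \ (Finset.range k).image v) ∪ (Finset.range k).image u) I2 ∧
    CondI G ((I1 \ (Finset.range k).image v) ∪ (Finset.range k).image u) I2 ∧
    CondII G ((I1 \ (Finset.range k).image v) ∪ (Finset.range k).image u) I2 := by
  classical
  obtain ⟨hk3, hured, -, huinj, hvinj, huv, hadj1, hadj2, -, c, hsupp⟩ := hcyc
  have hbc : blackCount k false = k := rfl
  rw [hbc] at hvinj huv hadj1 hadj2
  set U : Finset V := (Finset.range k).image u with hU
  set Vs : Finset V := (Finset.range k).image v with hVs
  set I1' : Finset V := (I1 \ Vs) ∪ U with hI1'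
  -- basic membership facts
  have hui1 : ∀ i < k, u i ∉ I1 := fun i hi => (hured i hi).1
  have hui2 : ∀ i < k, u i ∉ I2 := fun i hi => (hured i hi).2
  have hvi2 : ∀ i < k, v i ∉ I2 := fun i hi h2 =>
    (Finset.disjoint_left.mp hdisj (hblack i hi)) h2
  -- the "previous" black vertex adjacent to u j
  have hprev : ∀ j < k, G.Adj (v (if j = 0 then k - 1 else j - 1)) (u j) := by
    intro j hj
    by_cases hj0 : j = 0
    · subst hj0
      have hk1 : 1 ≤ k := by omega
      have h1 : (k - 1 + 1) % k = 0 := by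
        rw [Nat.sub_add_cancel hk1, Nat.mod_self]
      have := hadj2 (k - 1) (by omega)
      rw [h1] at this
      simpa using this
    · have hj1 : j - 1 + 1 = j := by omega
      have h1 : (j - 1 + 1) % k = j := by rw [hj1, Nat.mod_eq_of_lt hj]
      have := hadj2 (j - 1) (by omega)
      rw [h1] at this
      simpa [hj0] using this
  -- every red vertex within edist 2 of some u i is itself some u j
  have hnear : ∀ x : V, x ∈ redSet I1 I2 → ∀ i < k, G.edist x (u i) ≤ 2 →
      ∃ j < k, x = u j := by
    intro x hx i hi hd
    by_cases hxe : x = u i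
    · exact ⟨i, hi, hxe⟩
    · have hadjH : (Hgraph G I1 I2).Adj ⟨x, hx⟩ ⟨u i, hured i hi⟩ :=
        ⟨fun h => hxe (congrArg Subtype.val h), hd⟩
      have hmem : (⟨u i, hured i hi⟩ : redSet I1 I2) ∈ c.supp := by
        rw [hsupp]; exact ⟨i, hi, rfl⟩
      rw [SimpleGraph.ConnectedComponent.mem_supp_iff] at hmem
      have : (⟨x, hx⟩ : redSet I1 I2) ∈ c.supp := by
        rw [SimpleGraph.ConnectedComponent.mem_supp_iff, ← hmem]
        exact SimpleGraph.ConnectedComponent.sound hadjH.reachable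
      rw [hsupp] at this
      exact this
  -- every red vertex has a neighbor in I2
  have hredI2 : ∀ x : V, x ∈ redSet I1 I2 → ∃ w ∈ I2, G.Adj x w := by
    intro x hx
    by_contra hno
    push_neg at hno
    have hind : FinsetIndep G (insert x I2) := by
      intro a ha b hb hab
      rcases Finset.mem_insert.mp ha with ha' | ha'
      · rcases Finset.mem_insert.mp hb with hb' | hb'
        · exact G.irrefl (ha' ▸ hb' ▸ hab)
        · exact hno b hb' (ha' ▸ hab)
      · rcases Finset.mem_insert.mp hb with hb' | hb'
        · exact hno a ha' (hb' ▸ hab).symm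
        · exact hI2 a ha' b hb' hab
    have hd : Disjoint I1 (insert x I2) := by
      rw [Finset.disjoint_insert_right]
      exact ⟨hx.1, hdisj⟩
    have hle := hmax I1 (insert x I2) hd hI1 hind
    rw [Finset.card_insert_of_notMem hx.2] at hle
    omega
  -- the neighbors of u i are exactly v i, v (prev i), and a vertex of I2
  have hnbrs : ∀ i < k, ∀ y : V, G.Adj (u i) y → (∃ m < k, y = v m) ∨ y ∈ I2 := by
    intro i hi y hy
    obtain ⟨w, hw2, hw⟩ := hredI2 (u i) (hured i hi)
    set p : ℕ := if i = 0 then k - 1 else i - 1 with hp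
    have hpk : p < k := by simp only [hp]; split <;> omega
    have hpi : p ≠ i := by simp only [hp]; split <;> omega
    have hvpi : v p ≠ v i := fun h => hpi (hvinj p hpk i hi h)
    have hwv : ∀ m, m < k → w ≠ v m := by
      intro m hm h
      exact (Finset.disjoint_left.mp hdisj (hblack m hm)) (h ▸ hw2)
    have hsub : ({v i, v p, w} : Finset V) ⊆ G.neighborFinset (u i) := by
      intro a ha
      rw [SimpleGraph.mem_neighborFinset]
      rcases Finset.mem_insert.mp ha with rfl | ha
      · exact hadj1 i hi
      rcases Finset.mem_insert.mp ha with rfl | ha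
      · exact (hprev i hi).symm
      · rw [Finset.mem_singleton] at ha; subst ha; exact hw
    have hcard3 : ({v i, v p, w} : Finset V).card = 3 := by
      rw [Finset.card_insert_of_notMem (by
            simp only [Finset.mem_insert, Finset.mem_singleton]
            push_neg
            exact ⟨fun h => hvpi h.symm, fun h => hwv i hi h.symm⟩),
          Finset.card_insert_of_notMem (by
            simp only [Finset.mem_singleton]
            exact fun h => hwv p hpk h.symm),
          Finset.card_singleton]
    have heq : ({v i, v p, w} : Finset V) = G.neighborFinset (u i) :=
      Finset.eq_of_subset_of_card_le hsub (by
        rw [hcard3, SimpleGraph.card_neighborFinset_eq_degree, hcubic])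
    have hyn : y ∈ ({v i, v p, w} : Finset V) := by
      rw [heq, SimpleGraph.mem_neighborFinset]; exact hy
    rcases Finset.mem_insert.mp hyn with rfl | hyn
    · exact Or.inl ⟨i, hi, rfl⟩
    rcases Finset.mem_insert.mp hyn with rfl | hyn
    · exact Or.inl ⟨p, hpk, rfl⟩
    · rw [Finset.mem_singleton] at hyn; subst hyn; exact Or.inr hw2
  -- membership in I1'
  have hmemI1' : ∀ x : V, x ∈ I1' ↔ ((x ∈ I1 ∧ ¬ ∃ i < k, x = v i) ∨ ∃ i < k, x = u i) := by
    intro x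
    simp only [hI1', Finset.mem_union, Finset.mem_sdiff, hVs, hU, Finset.mem_image,
      Finset.mem_range]
    constructor
    · rintro (⟨h1, h2⟩ | ⟨i, hi, rfl⟩)
      · exact Or.inl ⟨h1, fun ⟨i, hi, he⟩ => h2 ⟨i, hi, he.symm⟩⟩
      · exact Or.inr ⟨i, hi, rfl⟩
    · rintro (⟨h1, h2⟩ | ⟨i, hi, rfl⟩)
      · exact Or.inl ⟨h1, fun ⟨i, hi, he⟩ => h2 ⟨i, hi, he.symm⟩⟩
      · exact Or.inr ⟨i, hi, rfl⟩
  -- Independence of I1'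
  have hindep : FinsetIndep G I1' := by
    intro x hx y hy hadj
    rw [hmemI1'] at hx hy
    rcases hy with ⟨hy1, hy2⟩ | ⟨j, hj, rfl⟩
    · rcases hx with ⟨hx1, hx2⟩ | ⟨i, hi, rfl⟩
      · exact hI1 x hx1 y hy1 hadj
      · rcases hnbrs i hi y hadj with ⟨m, hm, rfl⟩ | hy2'
        · exact hy2 ⟨m, hm, rfl⟩
        · exact (Finset.disjoint_left.mp hdisj hy1) hy2'
    · rcases hx with ⟨hx1, hx2⟩ | ⟨i, hi, rfl⟩
      · rcases hnbrs j hj x hadj.symm with ⟨m, hm, rfl⟩ | hx2'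
        · exact hx2 ⟨m, hm, rfl⟩
        · exact (Finset.disjoint_left.mp hdisj hx1) hx2'
      · rcases hnbrs i hi (u j) hadj with ⟨m, hm, he⟩ | h2
        · exact huv j hj m hm he
        · exact hui2 j hj h2
  -- Disjointness
  have hdisj' : Disjoint I1' I2 := by
    rw [Finset.disjoint_left]
    intro x hx hx2
    rw [hmemI1'] at hx
    rcases hx with ⟨hx1, -⟩ | ⟨i, hi, rfl⟩
    · exact (Finset.disjoint_left.mp hdisj hx1) hx2
    · exact hui2 i hi hx2
  -- cardinality
  have hUcard : U.card = k := by
    rw [hU, Finset.card_image_of_injOn, Finset.card_range]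
    intro a ha b hb hab
    exact huinj a (Finset.mem_range.mp ha) b (Finset.mem_range.mp hb) hab
  have hVscard : Vs.card = k := by
    rw [hVs, Finset.card_image_of_injOn, Finset.card_range]
    intro a ha b hb hab
    exact hvinj a (Finset.mem_range.mp ha) b (Finset.mem_range.mp hb) hab
  have hVsub : Vs ⊆ I1 := by
    intro x hx
    rw [hVs, Finset.mem_image] at hx
    obtain ⟨i, hi, rfl⟩ := hx
    exact hblack i (Finset.mem_range.mp hi)
  have hcard : I1'.card = I1.card := by
    have hdUV : Disjoint (I1 \ Vs) U := by
      rw [Finset.disjoint_right]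
      intro x hx
      rw [hU, Finset.mem_image] at hx
      obtain ⟨i, hi, rfl⟩ := hx
      rw [Finset.mem_sdiff]
      exact fun h => hui1 i (Finset.mem_range.mp hi) h.1
    rw [hI1', Finset.card_union_of_disjoint hdUV, Finset.card_sdiff_of_subset hVsub, hUcard, hVscard]
    have : k ≤ I1.card := hVscard ▸ Finset.card_le_card hVsub
    omega
  -- Condition (I)
  have hmax' : CondI G I1' I2 := by
    intro J1 J2 hd h1 h2
    rw [hcard]
    exact hmax J1 J2 hd h1 h2
  -- the number of red components is unchanged
  have hcomp : numRedComp G I1 I2 = numRedComp G I1' I2 := by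
    have huu : ∀ i < k, ∀ y : V, y ∈ redSet I1 I2 → ¬ G.Adj (u i) y := by
      intro i hi y hy hadj
      obtain ⟨j, hj, rfl⟩ := hnear y hy i hi
        (le_of_eq_of_le (edist_eq_one_iff_adj.mpr hadj.symm) one_le_two)
      rcases hnbrs i hi (u j) hadj with ⟨m, hm, he⟩ | h2
      · exact huv j hj m hm he
      · exact hui2 j hj h2
    have hvy : ∀ i < k, ∀ y : V, y ∈ redSet I1 I2 → (¬ ∃ j < k, y = u j) →
        ¬ G.Adj (v i) y := by
      intro i hi y hy hnu hadj
      refine hnu (hnear y hy i hi ?_)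
      calc G.edist y (u i) ≤ G.edist y (v i) + G.edist (v i) (u i) :=
            SimpleGraph.edist_triangle
        _ ≤ 1 + 1 := add_le_add
            (le_of_eq (edist_eq_one_iff_adj.mpr hadj.symm))
            (le_of_eq (edist_eq_one_iff_adj.mpr (hadj1 i hi).symm))
        _ = 2 := by norm_num
    have hvv : ∀ i < k, ∀ j < k, ¬ G.Adj (v i) (v j) := fun i hi j hj =>
      hI1 (v i) (hblack i hi) (v j) (hblack j hj)
    have hmemR' : ∀ x : V, x ∈ redSet I1' I2 ↔
        ((x ∈ redSet I1 I2 ∧ ¬ ∃ i < k, x = u i) ∨ ∃ i < k, x = v i) := by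
      intro x
      constructor
      · rintro ⟨hn1, hn2⟩
        rw [hmemI1'] at hn1
        push_neg at hn1
        obtain ⟨h1, h2⟩ := hn1
        by_cases hx1 : x ∈ I1
        · exact Or.inr (h1 hx1)
        · exact Or.inl ⟨⟨hx1, hn2⟩, fun ⟨i, hi, he⟩ => h2 i hi he⟩
      · rintro (⟨⟨h1, h2⟩, hnu⟩ | ⟨i, hi, rfl⟩)
        · refine ⟨?_, h2⟩
          rw [hmemI1']
          rintro (⟨hx1, -⟩ | ⟨i, hi, he⟩)
          · exact h1 hx1
          · exact hnu ⟨i, hi, he⟩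
        · refine ⟨?_, hvi2 i hi⟩
          rw [hmemI1']
          rintro (⟨-, hnv⟩ | ⟨j, hj, he⟩)
          · exact hnv ⟨i, hi, rfl⟩
          · exact huv j hj i hi he.symm
    set f : V → V := fun x => if h : ∃ i < k, x = u i then v h.choose else x with hf
    set g : V → V := fun x => if h : ∃ i < k, x = v i then u h.choose else x with hg
    have hfu : ∀ i < k, f (u i) = v i := by
      intro i hi
      have h : ∃ j, j < k ∧ u i = u j := ⟨i, hi, rfl⟩
      rw [hf]
      simp only [dif_pos h]
      obtain ⟨hlt, heq⟩ := h.choose_spec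
      exact (congrArg v (huinj i hi _ hlt heq)).symm
    have hfx : ∀ x : V, (¬ ∃ i < k, x = u i) → f x = x := by
      intro x h; rw [hf]; simp only [dif_neg h]
    have hgv : ∀ i < k, g (v i) = u i := by
      intro i hi
      have h : ∃ j, j < k ∧ v i = v j := ⟨i, hi, rfl⟩
      rw [hg]
      simp only [dif_pos h]
      obtain ⟨hlt, heq⟩ := h.choose_spec
      exact (congrArg u (hvinj i hi _ hlt heq)).symm
    have hgx : ∀ x : V, (¬ ∃ i < k, x = v i) → g x = x := by
      intro x h; rw [hg]; simp only [dif_neg h]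
    have hnotv : ∀ x : V, x ∈ redSet I1 I2 → ¬ ∃ i < k, x = v i := by
      rintro x hx ⟨i, hi, rfl⟩
      exact hx.1 (hblack i hi)
    have hfmem : ∀ x : V, x ∈ redSet I1 I2 → f x ∈ redSet I1' I2 := by
      intro x hx
      by_cases h : ∃ i < k, x = u i
      · obtain ⟨i, hi, rfl⟩ := h
        rw [hfu i hi, hmemR']
        exact Or.inr ⟨i, hi, rfl⟩
      · rw [hfx x h, hmemR']
        exact Or.inl ⟨hx, h⟩
    have hgmem : ∀ y : V, y ∈ redSet I1' I2 → g y ∈ redSet I1 I2 := by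
      intro y hy
      by_cases h : ∃ i < k, y = v i
      · obtain ⟨i, hi, rfl⟩ := h
        rw [hgv i hi]
        exact hured i hi
      · rw [hgx y h]
        rcases (hmemR' y).mp hy with ⟨h1, -⟩ | h2
        · exact h1
        · exact absurd h2 h
    have hgf : ∀ x : V, x ∈ redSet I1 I2 → g (f x) = x := by
      intro x hx
      by_cases h : ∃ i < k, x = u i
      · obtain ⟨i, hi, rfl⟩ := h
        rw [hfu i hi, hgv i hi]
      · rw [hfx x h, hgx x (hnotv x hx)]
    have hfg : ∀ y : V, y ∈ redSet I1' I2 → f (g y) = y := by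
      intro y hy
      by_cases h : ∃ i < k, y = v i
      · obtain ⟨i, hi, rfl⟩ := h
        rw [hgv i hi, hfu i hi]
      · rcases (hmemR' y).mp hy with ⟨-, hnu⟩ | h2
        · rw [hgx y h, hfx y hnu]
        · exact absurd h2 h
    have hAdj : ∀ x : V, x ∈ redSet I1 I2 → ∀ y : V, y ∈ redSet I1 I2 →
        (G.Adj (f x) (f y) ↔ G.Adj x y) := by
      intro x hx y hy
      by_cases hxu : ∃ i < k, x = u i
      · obtain ⟨i, hi, rfl⟩ := hxu
        rw [hfu i hi]
        by_cases hyu : ∃ j < k, y = u j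
        · obtain ⟨j, hj, rfl⟩ := hyu
          rw [hfu j hj]
          exact iff_of_false (hvv i hi j hj) (huu i hi (u j) (hured j hj))
        · rw [hfx y hyu]
          exact iff_of_false (hvy i hi y hy hyu) (huu i hi y hy)
      · rw [hfx x hxu]
        by_cases hyu : ∃ j < k, y = u j
        · obtain ⟨j, hj, rfl⟩ := hyu
          rw [hfu j hj]
          exact iff_of_false (fun h => hvy j hj x hx hxu h.symm)
            (fun h => huu j hj x hx h.symm)
        · rw [hfx y hyu]
    exact numComp_congr _ _
      ⟨fun x => ⟨f x, hfmem x x.2⟩, fun y => ⟨g y, hgmem y y.2⟩,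
        fun x => Subtype.ext (hgf x x.2), fun y => Subtype.ext (hfg y y.2)⟩
      (fun x y => hAdj x x.2 y y.2)
  refine ⟨hindep, hdisj', hmax', ?_⟩
  intro J1 J2 hd h1 h2 hc1
  rw [← hcomp]
  exact hmin J1 J2 hd h1 h2 hc1
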